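/- Let G be a finite Abelian group, H a subgroup with orthogonal subgroup H^⊥, f : G → {-1,1}, and r ∈ G. Define F_{r+H}f(x) = Σ_{γ ∈ r+H} f̂(χ_γ)² χ_γ(x). Then F_{r+H}f(x) = E_{z₁ ∈ G, z ∈ H^⊥}[ f(z₁) f(x − z₁ − z) χ_r(z) ]. -/

import Mathlib

open Finset

/-- `G = ZMod (p 0 ^ m 0) × ⋯ × ZMod (p (n-1) ^ m (n-1))`. -/
abbrev Gp (n : ℕ) (p m : Fin n → ℕ) := ∀ i : Fin n, ZMod (p i ^ m i)

/-- `L = lcm (p i ^ m i)`. -/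
abbrev Lnum (n : ℕ) (p m : Fin n → ℕ) : ℕ := Finset.univ.lcm fun i : Fin n => p i ^ m i

/-- The pseudo inner product `r * x = (∑ i, (L / pᵢ^mᵢ) rⁱ xⁱ) mod L`, valued in `ℤ_L`. -/
def pip {n : ℕ} {p m : Fin n → ℕ} (r x : Gp n p m) : ZMod (Lnum n p m) :=
  ∑ i : Fin n, (((Lnum n p m / p i ^ m i) * (r i).val * (x i).val : ℕ) : ZMod (Lnum n p m))

/-- The character of `G` indexed by `r`: `χ_r x = ω_L ^ (r * x)` where `ω_L = exp(2πi/L)`. -/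
noncomputable def chi {n : ℕ} {p m : Fin n → ℕ} (r x : Gp n p m) : ℂ :=
  Complex.exp (2 * Real.pi * Complex.I * ((pip r x).val : ℕ) / (Lnum n p m : ℕ))

/-- The Fourier coefficient `f̂(χ_r) = (1/|G|) ∑ x, f x * conj (χ_r x)`. -/
noncomputable def fhat {n : ℕ} {p m : Fin n → ℕ} [∀ i, NeZero (p i ^ m i)]
    (f : Gp n p m → ℂ) (r : Gp n p m) : ℂ :=
  (Fintype.card (Gp n p m) : ℂ)⁻¹ * ∑ x : Gp n p m, f x * (starRingEnd ℂ) (chi r x)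

set_option linter.unusedSectionVars false

section Aux
variable {n : ℕ} {p m : Fin n → ℕ} [hnz : ∀ i, NeZero (p i ^ m i)]

lemma L_ne_zero : Lnum n p m ≠ 0 := by
  intro h
  rw [Finset.lcm_eq_zero_iff] at h
  obtain ⟨i, -, hi⟩ := h
  exact (hnz i).out hi

instance : NeZero (Lnum n p m) := ⟨L_ne_zero⟩

lemma dvd_L (i : Fin n) : p i ^ m i ∣ Lnum n p m := Finset.dvd_lcm (mem_univ i)

/-- auxiliary exponential on `ZMod L`. -/
noncomputable def Ee (a : ZMod (Lnum n p m)) : ℂ :=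
  Complex.exp (2 * Real.pi * Complex.I * (a.val : ℕ) / (Lnum n p m : ℕ))

lemma chi_eq (r x : Gp n p m) : chi r x = Ee (pip r x) := rfl

lemma Ee_natCast (a : ℕ) :
    Ee ((a : ZMod (Lnum n p m))) = Complex.exp (2 * Real.pi * Complex.I * a / (Lnum n p m : ℕ)) := by
  set L := Lnum n p m with hL
  have hL0 : (L : ℂ) ≠ 0 := Nat.cast_ne_zero.mpr L_ne_zero
  rw [Ee, ZMod.val_natCast]
  have h : a = L * (a / L) + a % L := (Nat.div_add_mod a L).symm
  have hc : (a : ℂ) = (L : ℂ) * ((a / L : ℕ) : ℂ) + ((a % L : ℕ) : ℂ) := by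
    exact_mod_cast congrArg (Nat.cast : ℕ → ℂ) h
  calc Complex.exp (2 * Real.pi * Complex.I * (a % L : ℕ) / (L : ℕ))
      = Complex.exp (2 * Real.pi * Complex.I * (a % L : ℕ) / (L : ℕ)) *
        Complex.exp ((a / L : ℕ) * (2 * Real.pi * Complex.I)) := by
        rw [Complex.exp_nat_mul_two_pi_mul_I, mul_one]
    _ = Complex.exp (2 * Real.pi * Complex.I * a / L) := by
        rw [← Complex.exp_add]
        congr 1
        field_simp
        linear_combination -hc

lemma Ee_natCast_add (c d : ℕ) :
    Ee (((c + d : ℕ)) : ZMod (Lnum n p m)) = Ee ((c : ℕ) : ZMod (Lnum n p m)) * Ee ((d : ℕ) : ZMod (Lnum n p m)) := by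
  rw [Ee_natCast, Ee_natCast, Ee_natCast, ← Complex.exp_add]
  congr 1
  push_cast
  ring

lemma natCast_val_self (a : ZMod (Lnum n p m)) : ((a.val : ℕ) : ZMod (Lnum n p m)) = a := by
  rw [ZMod.natCast_val, ZMod.cast_id]

lemma Ee_add (a b : ZMod (Lnum n p m)) : Ee (a + b) = Ee a * Ee b := by
  rw [← natCast_val_self a, ← natCast_val_self b, ← Nat.cast_add, Ee_natCast_add]

lemma Ee_zero : Ee (0 : ZMod (Lnum n p m)) = 1 := by
  simp [Ee]

lemma Ee_eq_one_iff (a : ZMod (Lnum n p m)) : Ee a = 1 ↔ a = 0 := by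
  constructor
  · intro h
    rw [Ee, Complex.exp_eq_one_iff] at h
    obtain ⟨k, hk⟩ := h
    have hL0 : (Lnum n p m : ℂ) ≠ 0 := Nat.cast_ne_zero.mpr L_ne_zero
    have hpi : (2 * (Real.pi:ℂ) * Complex.I) ≠ 0 := by
      simp [Real.pi_ne_zero, Complex.I_ne_zero, Real.pi_ne_zero]
    have hvC : (a.val : ℂ) = (k : ℂ) * (Lnum n p m : ℂ) := by
      have h2 : (a.val : ℂ) * (2 * (Real.pi:ℂ) * Complex.I)
          = ((k : ℂ) * (Lnum n p m : ℂ)) * (2 * (Real.pi:ℂ) * Complex.I) := by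
        field_simp at hk
        linear_combination (2 * (Real.pi:ℂ) * Complex.I) * hk
      exact mul_right_cancel₀ hpi h2
    have hvZ : (a.val : ℤ) = k * (Lnum n p m : ℤ) := by exact_mod_cast hvC
    have hlt : (a.val : ℤ) < (Lnum n p m : ℤ) := by exact_mod_cast a.val_lt
    have hge : (0 : ℤ) ≤ (a.val : ℤ) := Int.natCast_nonneg _
    have hLpos : (0 : ℤ) < (Lnum n p m : ℤ) := by
      exact_mod_cast Nat.pos_of_ne_zero L_ne_zero
    have hk0 : k = 0 := by
      rcases lt_trichotomy k 0 with h' | h' | h'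
      · nlinarith
      · exact h'
      · nlinarith
    have hv0 : (a.val : ℤ) = 0 := by rw [hvZ, hk0, zero_mul]
    have : a.val = 0 := by exact_mod_cast hv0
    exact (ZMod.val_eq_zero a).mp this
  · intro h; rw [h]; exact Ee_zero

lemma Ee_neg (a : ZMod (Lnum n p m)) : Ee (-a) = (Ee a)⁻¹ := by
  have h : Ee a * Ee (-a) = 1 := by rw [← Ee_add]; simp [Ee_zero]
  exact (inv_eq_of_mul_eq_one_right h).symm

lemma Ee_ne_zero (a : ZMod (Lnum n p m)) : Ee a ≠ 0 := Complex.exp_ne_zero _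

lemma conj_Ee (a : ZMod (Lnum n p m)) : (starRingEnd ℂ) (Ee a) = Ee (-a) := by
  rw [Ee_neg]
  rw [show Ee a = Complex.exp
      (((2 * Real.pi * (a.val : ℝ) / (Lnum n p m : ℝ) : ℝ) : ℂ) * Complex.I) by
    rw [Ee]; congr 1; push_cast; ring]
  rw [← Complex.exp_conj, ← Complex.exp_neg]
  congr 1
  simp only [map_mul, Complex.conj_I, Complex.conj_ofReal]
  ring

end Aux

section Pip
variable {n : ℕ} {p m : Fin n → ℕ} [hnz : ∀ i, NeZero (p i ^ m i)]

lemma pip_comm (r x : Gp n p m) : pip r x = pip x r := by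
  unfold pip
  congr 1; funext i
  rw [mul_assoc, mul_assoc, Nat.mul_comm ((r i).val)]

lemma cast_mul_mod (s k : ℕ) (hk : k ∣ Lnum n p m) :
    ((Lnum n p m / k : ℕ) : ZMod (Lnum n p m)) * ((s % k : ℕ) : ZMod (Lnum n p m))
      = ((Lnum n p m / k : ℕ) : ZMod (Lnum n p m)) * (s : ZMod (Lnum n p m)) := by
  have h : ((s : ℕ) : ZMod (Lnum n p m))
      = ((k : ℕ) : ZMod (Lnum n p m)) * ((s / k : ℕ) : ZMod (Lnum n p m))
        + ((s % k : ℕ) : ZMod (Lnum n p m)) := by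
    have := (Nat.div_add_mod s k).symm
    calc ((s : ℕ) : ZMod (Lnum n p m)) = ((k * (s / k) + s % k : ℕ) : ZMod (Lnum n p m)) := by
          exact_mod_cast congrArg (Nat.cast : ℕ → ZMod (Lnum n p m)) this
      _ = _ := by push_cast; ring
  have hck : ((Lnum n p m / k : ℕ) : ZMod (Lnum n p m)) * ((k : ℕ) : ZMod (Lnum n p m)) = 0 := by
    rw [← Nat.cast_mul, Nat.div_mul_cancel hk, ZMod.natCast_self]
  linear_combination (-(((Lnum n p m / k : ℕ) : ZMod (Lnum n p m)))) * h
    + (-(((s / k : ℕ) : ZMod (Lnum n p m)))) * hck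

lemma term_add (i : Fin n) (rv : ℕ) (a b : ZMod (p i ^ m i)) :
    ((Lnum n p m / p i ^ m i * rv * (a + b).val : ℕ) : ZMod (Lnum n p m))
      = ((Lnum n p m / p i ^ m i * rv * a.val : ℕ) : ZMod (Lnum n p m))
        + ((Lnum n p m / p i ^ m i * rv * b.val : ℕ) : ZMod (Lnum n p m)) := by
  have hk := dvd_L (p := p) (m := m) i
  rw [ZMod.val_add]
  have h := cast_mul_mod ((a.val + b.val)) (p i ^ m i) hk
  push_cast at h ⊢
  linear_combination ((rv : ℕ) : ZMod (Lnum n p m)) * h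

lemma pip_add_right (r x y : Gp n p m) : pip r (x + y) = pip r x + pip r y := by
  unfold pip
  rw [← Finset.sum_add_distrib]
  congr 1; funext i
  exact term_add i ((r i).val) (x i) (y i)

lemma pip_zero_right (r : Gp n p m) : pip r 0 = 0 := by
  unfold pip
  simp [ZMod.val_zero]

lemma pip_neg_right (r x : Gp n p m) : pip r (-x) = -pip r x := by
  have h := pip_add_right r x (-x)
  rw [add_neg_cancel, pip_zero_right] at h
  linear_combination -h

end Pip

section Chi
variable {n : ℕ} {p m : Fin n → ℕ} [hnz : ∀ i, NeZero (p i ^ m i)]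

lemma chi_comm (r x : Gp n p m) : chi r x = chi x r := by rw [chi_eq, chi_eq, pip_comm]

lemma chi_add_right (r x y : Gp n p m) : chi r (x + y) = chi r x * chi r y := by
  rw [chi_eq, chi_eq, chi_eq, pip_add_right, Ee_add]

lemma chi_add_left (r s x : Gp n p m) : chi (r + s) x = chi r x * chi s x := by
  rw [chi_comm, chi_add_right, chi_comm x r, chi_comm x s]

lemma chi_zero_right (r : Gp n p m) : chi r 0 = 1 := by
  rw [chi_eq, pip_zero_right, Ee_zero]

lemma chi_neg_right (r x : Gp n p m) : chi r (-x) = (chi r x)⁻¹ := by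
  rw [chi_eq, chi_eq, pip_neg_right, Ee_neg]

lemma conj_chi (r x : Gp n p m) : (starRingEnd ℂ) (chi r x) = chi r (-x) := by
  rw [chi_eq, chi_eq, pip_neg_right, conj_Ee]

lemma chi_ne_zero (r x : Gp n p m) : chi r x ≠ 0 := Complex.exp_ne_zero _

lemma chi_eq_one_iff (r x : Gp n p m) : chi r x = 1 ↔ pip r x = 0 := by
  rw [chi_eq, Ee_eq_one_iff]

lemma exists_pip_ne_zero (w : Gp n p m) (hw : w ≠ 0) : ∃ x : Gp n p m, pip w x ≠ 0 := by
  have : ∃ i, w i ≠ 0 := by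
    by_contra h
    push_neg at h
    exact hw (funext h)
  obtain ⟨i, hi⟩ := this
  have hk1 : 1 < p i ^ m i := by
    rcases Nat.lt_or_ge 1 (p i ^ m i) with h | h
    · exact h
    · exfalso
      have h0 : p i ^ m i ≠ 0 := (hnz i).out
      have h1 : p i ^ m i = 1 := by omega
      apply hi
      have : ∀ a b : ZMod (p i ^ m i), a = b := by
        rw [h1]; intro a b; exact Subsingleton.elim a b
      exact this _ _
  haveI : Fact (1 < p i ^ m i) := ⟨hk1⟩
  refine ⟨Pi.single i 1, ?_⟩
  unfold pip
  rw [Finset.sum_eq_single i]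
  · rw [Pi.single_eq_same, ZMod.val_one]
    intro hcon
    rw [ZMod.natCast_eq_zero_iff] at hcon
    set L := Lnum n p m
    set k := p i ^ m i
    have hkL : k ∣ L := dvd_L i
    have hL0 : L ≠ 0 := L_ne_zero
    have hcpos : 0 < L / k := Nat.div_pos (Nat.le_of_dvd (Nat.pos_of_ne_zero hL0) hkL) (by omega)
    have hv0 : 0 < (w i).val := Nat.pos_of_ne_zero (fun h => hi ((ZMod.val_eq_zero _).mp h))
    have hvlt : (w i).val < k := (w i).val_lt
    have hlt : L / k * (w i).val * 1 < L := by
      calc L / k * (w i).val * 1 = L / k * (w i).val := by ring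
        _ < L / k * k := by exact (Nat.mul_lt_mul_left hcpos).mpr hvlt
        _ = L := Nat.div_mul_cancel hkL
    have hpos : 0 < L / k * (w i).val * 1 := by positivity
    exact absurd (Nat.le_of_dvd hpos hcon) (by omega)
  · intro j _ hj
    rw [Pi.single_eq_of_ne hj, ZMod.val_zero, Nat.mul_zero, Nat.cast_zero]
  · intro h; exact absurd (Finset.mem_univ i) h

end Chi

section Sums
variable {n : ℕ} {p m : Fin n → ℕ} [hnz : ∀ i, NeZero (p i ^ m i)]

lemma chi_zero_left (x : Gp n p m) : chi 0 x = 1 := by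
  rw [chi_comm, chi_zero_right]

lemma sum_chi_subgroup (S : AddSubgroup (Gp n p m)) [DecidablePred (· ∈ S)] (w : Gp n p m) :
    ∑ s ∈ Finset.univ.filter (· ∈ S), chi w s
      = if (∀ s ∈ S, pip w s = 0) then ((Finset.univ.filter (· ∈ S)).card : ℂ) else 0 := by
  split_ifs with h
  · rw [Finset.sum_congr rfl (fun s hs => by
      rw [(chi_eq_one_iff w s).mpr (h s (Finset.mem_filter.mp hs).2)]),
      Finset.sum_const, nsmul_eq_mul, mul_one]
  · push_neg at h
    obtain ⟨s₀, hs₀S, hs₀⟩ := h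
    have h1 : chi w s₀ ≠ 1 := fun hc => hs₀ ((chi_eq_one_iff w s₀).mp hc)
    set T := ∑ s ∈ Finset.univ.filter (· ∈ S), chi w s with hT
    have h2 : T = chi w s₀ * T := by
      rw [hT, Finset.mul_sum]
      refine Finset.sum_nbij' (fun s => -s₀ + s) (fun s => s₀ + s) ?_ ?_ ?_ ?_ ?_
      · intro a ha
        simp only [Finset.mem_filter, Finset.mem_univ, true_and] at ha ⊢
        exact S.add_mem (S.neg_mem hs₀S) ha
      · intro a ha
        simp only [Finset.mem_filter, Finset.mem_univ, true_and] at ha ⊢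
        exact S.add_mem hs₀S ha
      · intro a _; exact add_neg_cancel_left s₀ a
      · intro a _; exact neg_add_cancel_left s₀ a
      · intro a _
        rw [← chi_add_right, add_neg_cancel_left]
    have h3 : (chi w s₀ - 1) * T = 0 := by linear_combination -h2
    rcases mul_eq_zero.mp h3 with h4 | h4
    · exact absurd (by linear_combination h4) h1
    · exact h4

lemma sum_chi_univ (w : Gp n p m) :
    ∑ x : Gp n p m, chi w x = if w = 0 then (Fintype.card (Gp n p m) : ℂ) else 0 := by
  classical
  have h := sum_chi_subgroup (⊤ : AddSubgroup (Gp n p m)) w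
  have hfil : Finset.univ.filter (· ∈ (⊤ : AddSubgroup (Gp n p m))) = Finset.univ := by
    apply Finset.filter_true_of_mem
    intro a _
    exact AddSubgroup.mem_top a
  rw [hfil] at h
  rw [h]
  have hiff : (∀ s ∈ (⊤ : AddSubgroup (Gp n p m)), pip w s = 0) ↔ w = 0 := by
    constructor
    · intro hall
      by_contra hw
      obtain ⟨x₀, hx₀⟩ := exists_pip_ne_zero w hw
      exact hx₀ (hall x₀ (AddSubgroup.mem_top x₀))
    · intro hw s _
      subst hw
      rw [pip_comm, pip_zero_right]
  rw [Finset.card_univ]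
  split_ifs with h1 h2 h2
  · rfl
  · exact absurd (hiff.mp h1) h2
  · exact absurd (hiff.mpr h2) h1
  · rfl

lemma card_mul_card (H : AddSubgroup (Gp n p m)) [DecidablePred (· ∈ H)] :
    ((Finset.univ.filter (· ∈ H)).card : ℂ)
        * ((Finset.univ.filter fun z : Gp n p m => ∀ y ∈ H, pip z y = 0).card : ℂ)
      = (Fintype.card (Gp n p m) : ℂ) := by
  have key : ∑ x : Gp n p m, ∑ h ∈ Finset.univ.filter (· ∈ H), chi x h
      = ((Finset.univ.filter fun z : Gp n p m => ∀ y ∈ H, pip z y = 0).card : ℂ)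
        * ((Finset.univ.filter (· ∈ H)).card : ℂ) := by
    rw [Finset.sum_congr rfl (fun x _ => sum_chi_subgroup H x)]
    rw [Finset.sum_ite, Finset.sum_const, Finset.sum_const_zero, add_zero, nsmul_eq_mul]
  have key2 : ∑ x : Gp n p m, ∑ h ∈ Finset.univ.filter (· ∈ H), chi x h
      = (Fintype.card (Gp n p m) : ℂ) := by
    rw [Finset.sum_comm]
    rw [Finset.sum_congr rfl (fun h _ => Finset.sum_congr rfl (fun x _ => chi_comm x h))]
    rw [Finset.sum_congr rfl (fun h _ => sum_chi_univ h)]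
    rw [Finset.sum_ite_eq' (Finset.univ.filter (· ∈ H)) 0 (fun _ => (Fintype.card (Gp n p m) : ℂ)),
      if_pos (Finset.mem_filter.mpr ⟨Finset.mem_univ _, H.zero_mem⟩)]
  rw [mul_comm, ← key, key2]

end Sums


/-- The squared-coefficient projection onto the coset `r + H` satisfies
`F_{r+H} f(x) = E_{z₁ ∈ G, z ∈ H^⊥} [f(z₁) f(x - z₁ - z) χ_r(z)]`. -/
theorem squared_projection_eq_average (n : ℕ) (p m : Fin n → ℕ) (hp : ∀ i, (p i).Prime)
    [∀ i, NeZero (p i ^ m i)] (H : AddSubgroup (Gp n p m)) [DecidablePred (· ∈ H)]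
    (f : Gp n p m → ℝ) (hf : ∀ x, f x = 1 ∨ f x = -1) (r x : Gp n p m) :
    ∑ γ ∈ Finset.univ.filter (fun γ : Gp n p m => γ - r ∈ H),
        (fhat (fun y => (f y : ℂ)) γ) ^ 2 * chi γ x
      = ((Fintype.card (Gp n p m) : ℂ)
            * ((Finset.univ.filter fun z : Gp n p m => ∀ y ∈ H, pip z y = 0).card : ℂ))⁻¹
          * ∑ z₁ : Gp n p m,
              ∑ z ∈ Finset.univ.filter (fun z : Gp n p m => ∀ y ∈ H, pip z y = 0),
                ((f z₁ * f (x - z₁ - z) : ℝ) : ℂ) * chi r z := by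
  classical
  set cG := (Fintype.card (Gp n p m) : ℂ) with hcGdef
  set g : Gp n p m → ℂ := fun y => (f y : ℂ) with hg
  set HF := Finset.univ.filter (fun h : Gp n p m => h ∈ H) with hHF
  set K := Finset.univ.filter (fun z : Gp n p m => ∀ y ∈ H, pip z y = 0) with hKdef
  have hinv : ∀ γ : Gp n p m, r + (γ - r) = γ := fun γ => by
    rw [add_comm, sub_add_cancel]
  have hinv2 : ∀ h : Gp n p m, (r + h) - r = h := fun h => add_sub_cancel_left r h
  -- Step 1 : reindex the coset sum
  have step1 : (∑ γ ∈ Finset.univ.filter (fun γ : Gp n p m => γ - r ∈ H),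
        (fhat g γ) ^ 2 * chi γ x)
      = ∑ h ∈ HF, (fhat g (r + h)) ^ 2 * chi (r + h) x := by
    refine Finset.sum_nbij' (fun γ => γ - r) (fun h => r + h) ?_ ?_ ?_ ?_ ?_
    · intro γ hγ
      simp only [hHF, Finset.mem_filter, Finset.mem_univ, true_and] at *
      exact hγ
    · intro h hh
      simp only [hHF, Finset.mem_filter, Finset.mem_univ, true_and] at *
      rw [hinv2]
      exact hh
    · intro γ _; exact hinv γ
    · intro h _; exact hinv2 h
    · intro γ _; rw [hinv γ]
  -- Step 2 : expand the squared Fourier coefficient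
  have expand : ∀ h : Gp n p m, (fhat g (r + h)) ^ 2 * chi (r + h) x
      = cG⁻¹ * cG⁻¹ * ∑ a : Gp n p m, ∑ b : Gp n p m,
          (g a * g b) * chi (r + h) (x - a - b) := by
    intro h
    set γ := r + h with hγ
    have hSS : (∑ a : Gp n p m, g a * (starRingEnd ℂ) (chi γ a))
          * (∑ b : Gp n p m, g b * (starRingEnd ℂ) (chi γ b)) * chi γ x
        = ∑ a : Gp n p m, ∑ b : Gp n p m, (g a * g b) * chi γ (x - a - b) := by
      rw [Finset.sum_mul_sum, Finset.sum_mul]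
      refine Finset.sum_congr rfl fun a _ => ?_
      rw [Finset.sum_mul]
      refine Finset.sum_congr rfl fun b _ => ?_
      rw [conj_chi, conj_chi]
      have hx : chi γ (x - a - b) = chi γ x * chi γ (-a) * chi γ (-b) := by
        rw [show x - a - b = x + -a + -b by rw [sub_eq_add_neg, sub_eq_add_neg],
          chi_add_right, chi_add_right]
      rw [hx]; ring
    calc (fhat g γ) ^ 2 * chi γ x
        = cG⁻¹ * cG⁻¹ * ((∑ a : Gp n p m, g a * (starRingEnd ℂ) (chi γ a))
            * (∑ b : Gp n p m, g b * (starRingEnd ℂ) (chi γ b)) * chi γ x) := by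
          rw [fhat]; ring
      _ = _ := by rw [hSS]
  -- Step 3 : swap sums and evaluate the inner character sum over the subgroup
  have step2 : ∑ h ∈ HF, (fhat g (r + h)) ^ 2 * chi (r + h) x
      = cG⁻¹ * cG⁻¹ * ∑ a : Gp n p m, ∑ b : Gp n p m,
          (g a * g b) * (chi r (x - a - b)
            * (if (∀ y ∈ H, pip (x - a - b) y = 0) then (HF.card : ℂ) else 0)) := by
    rw [Finset.sum_congr rfl (fun h _ => expand h), ← Finset.mul_sum]
    congr 1
    rw [Finset.sum_comm]
    refine Finset.sum_congr rfl fun a _ => ?_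
    rw [Finset.sum_comm]
    refine Finset.sum_congr rfl fun b _ => ?_
    rw [← Finset.mul_sum]
    congr 1
    rw [Finset.sum_congr rfl (fun h _ => chi_add_left r h (x - a - b)), ← Finset.mul_sum]
    congr 1
    rw [Finset.sum_congr rfl (fun h _ => chi_comm h (x - a - b))]
    exact sum_chi_subgroup H (x - a - b)
  -- Step 4 : rewrite the ite as a filtered sum and reindex b ↦ z = x - a - b
  have step3 : ∀ a : Gp n p m,
      (∑ b : Gp n p m, (g a * g b) * (chi r (x - a - b)
          * (if (∀ y ∈ H, pip (x - a - b) y = 0) then (HF.card : ℂ) else 0)))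
        = (HF.card : ℂ) * ∑ z ∈ K, (g a * g (x - a - z)) * chi r z := by
    intro a
    have h1 : ∀ b : Gp n p m, (g a * g b) * (chi r (x - a - b)
          * (if (∀ y ∈ H, pip (x - a - b) y = 0) then (HF.card : ℂ) else 0))
        = (if (∀ y ∈ H, pip (x - a - b) y = 0)
            then (HF.card : ℂ) * ((g a * g b) * chi r (x - a - b)) else 0) := by
      intro b; split_ifs with h <;> ring
    rw [Finset.sum_congr rfl (fun b _ => h1 b), ← Finset.sum_filter]
    rw [Finset.mul_sum]
    refine Finset.sum_nbij' (fun b => x - a - b) (fun z => x - a - z) ?_ ?_ ?_ ?_ ?_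
    · intro b hb
      simp only [hKdef, Finset.mem_filter, Finset.mem_univ, true_and] at *
      exact hb
    · intro z hz
      simp only [hKdef, Finset.mem_filter, Finset.mem_univ, true_and] at *
      rw [sub_sub_cancel (x - a) z]
      exact hz
    · intro b _; exact sub_sub_cancel (x - a) b
    · intro z _; exact sub_sub_cancel (x - a) z
    · intro b _
      rw [sub_sub_cancel (x - a) b]
  -- Put everything together
  have hHK := card_mul_card H
  rw [← hHF, ← hKdef] at hHK
  have hcG0 : cG ≠ 0 := by
    rw [hcGdef]
    exact_mod_cast Nat.cast_ne_zero.mpr Fintype.card_ne_zero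
  have hK0 : (K.card : ℂ) ≠ 0 := by
    intro h0
    rw [h0, mul_zero] at hHK
    exact hcG0 hHK.symm
  rw [step1, step2]
  rw [Finset.sum_congr rfl (fun a _ => step3 a), ← Finset.mul_sum]
  have hterm : ∀ (a z : Gp n p m), ((f a * f (x - a - z) : ℝ) : ℂ)
      = g a * g (x - a - z) := by intro a z; push_cast [hg]; ring
  rw [show (∑ z₁ : Gp n p m, ∑ z ∈ K, ((f z₁ * f (x - z₁ - z) : ℝ) : ℂ) * chi r z)
      = ∑ z₁ : Gp n p m, ∑ z ∈ K, (g z₁ * g (x - z₁ - z)) * chi r z from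
    Finset.sum_congr rfl fun a _ => Finset.sum_congr rfl fun z _ => by rw [hterm]]
  have hconst : cG⁻¹ * cG⁻¹ * (HF.card : ℂ) = (cG * (K.card : ℂ))⁻¹ := by
    rw [mul_inv]
    field_simp
    linear_combination hHK
  linear_combination (∑ z₁ : Gp n p m, ∑ z ∈ K, (g z₁ * g (x - z₁ - z)) * chi r z) * hconst
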